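/- Let S be a finite subset of Z^2 and let K(x,y;t) = 1 - t sum_{(i,j) in S} x^i y^j. Let B(x;t) in R[x,x^{-1}][[t]] be the generating function for bilateral walks with steps in S (it satisfies B(x;0)=1), and let (B_0(t), B_+(x;t), B_-(x^{-1};t)) be its canonical factorization. Let L(t), S_0(x;t) and S(x,y;t) be the generating functions for loops, bilateral walks on the slit plane, and all walks on the slit plane, respectively. Then L(t) = B_0(t), S_0(x;t) = B_+(x;t), and K(x,y;t) * S(x,y;t) * B_0(t) * B_-(x^{-1};t) = 1 in R[x,x^{-1},y,y^{-1}][[t]]. -/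

import Mathlib

open scoped Classical
open PowerSeries

namespace SlitPlane

/-- A point (or step) of the lattice `ℤ²`. -/
abbrev Pt := ℤ × ℤ

/-- All steps of the walk `l` belong to `S`.  A walk is identified with its
list of steps; it starts at the origin. -/
def StepsIn (S : Finset Pt) (l : List Pt) : Prop := ∀ s ∈ l, s ∈ S

/-- The vertex `w_i` of the walk reached after `i` steps. -/
def vert (l : List Pt) (i : ℕ) : Pt := (l.take i).sum

/-- Membership in the half-line `H = {(k,0) : k ≤ 0}`. -/
def OnH (p : Pt) : Prop := p.2 = 0 ∧ p.1 ≤ 0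

/-- Membership in the half-line `{(k,0) : k < 0}`. -/
def OnNegAxis (p : Pt) : Prop := p.2 = 0 ∧ p.1 < 0

/-- A walk on the slit plane: none of the vertices `w_1, ..., w_n` lies on `H`. -/
def AvoidsH (l : List Pt) : Prop := ∀ i, 1 ≤ i → i ≤ l.length → ¬ OnH (vert l i)

/-- Number of walks of length `n` on the slit plane, with steps in `S`, ending at `e`. -/
noncomputable def slitCount (S : Finset Pt) (n : ℕ) (e : Pt) : ℕ :=
  Set.ncard {l : List Pt | l.length = n ∧ StepsIn S l ∧ AvoidsH l ∧ l.sum = e}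

/-- Number of (unconstrained) walks of length `n` with steps in `S` ending at `e`. -/
noncomputable def walkCount (S : Finset Pt) (n : ℕ) (e : Pt) : ℕ :=
  Set.ncard {l : List Pt | l.length = n ∧ StepsIn S l ∧ l.sum = e}

/-- Number of loops of length `n` with steps in `S`: walks ending at the origin,
none of whose vertices lies on `{(k,0) : k < 0}`. -/
noncomputable def loopCount (S : Finset Pt) (n : ℕ) : ℕ :=
  Set.ncard {l : List Pt | l.length = n ∧ StepsIn S l ∧
    (∀ i ≤ l.length, ¬ OnNegAxis (vert l i)) ∧ l.sum = (0, 0)}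

end SlitPlane

namespace SlitPlane

/-- The Laurent polynomial ring `ℝ[x, x⁻¹]`. -/
abbrev E1 := AddMonoidAlgebra ℝ ℤ

/-- The Laurent polynomial ring `ℝ[x, x⁻¹, y, y⁻¹]`: monomial `(i,j)` is `x^i y^j`. -/
abbrev E2 := AddMonoidAlgebra ℝ (ℤ × ℤ)

/-- The embedding `ℝ[x,x⁻¹] → ℝ[x,x⁻¹,y,y⁻¹]`. -/
noncomputable def iotaX : E1 →+* E2 :=
  AddMonoidAlgebra.mapDomainRingHom ℝ (AddMonoidHom.inl ℤ ℤ)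

/-- The polynomial `K(x,y;t) = 1 - t ∑_{(i,j) ∈ S} x^i y^j`, as a power series in `t`. -/
noncomputable def Kpoly (S : Finset Pt) : PowerSeries E2 :=
  1 - PowerSeries.X * PowerSeries.C (R := E2) (∑ s ∈ S, AddMonoidAlgebra.single s (1 : ℝ))

/-- `(B₀, B₊, B₋)` is a canonical factorization of `B`. -/
def IsCanonicalFactorization (B : PowerSeries E1)
    (B0 : PowerSeries ℝ) (Bp Bm : PowerSeries E1) : Prop :=
  B = PowerSeries.map (algebraMap ℝ E1) B0 * Bp * Bm ∧
  (∀ (n : ℕ) (i : ℤ), i < 0 → (PowerSeries.coeff (R := E1) n Bp).coeff i = 0) ∧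
  (∀ (n : ℕ) (i : ℤ), 0 < i → (PowerSeries.coeff (R := E1) n Bm).coeff i = 0) ∧
  PowerSeries.coeff (R := ℝ) 0 B0 = 1 ∧
  PowerSeries.coeff (R := E1) 0 Bp = 1 ∧
  PowerSeries.coeff (R := E1) 0 Bm = 1 ∧
  (∀ n : ℕ, 1 ≤ n → (PowerSeries.coeff (R := E1) n Bp).coeff 0 = 0) ∧
  (∀ n : ℕ, 1 ≤ n → (PowerSeries.coeff (R := E1) n Bm).coeff 0 = 0)

namespace SlitPlane -- aux
end SlitPlane

lemma vert_zero (l : List Pt) : vert l 0 = 0 := rfl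
lemma vert_length (l : List Pt) : vert l l.length = l.sum := by simp [vert]
lemma vert_of_le (l : List Pt) {i : ℕ} (h : l.length ≤ i) : vert l i = l.sum := by
  simp [vert, List.take_of_length_le h]
lemma vert_append_left (a b : List Pt) {i : ℕ} (h : i ≤ a.length) :
    vert (a ++ b) i = vert a i := by
  simp [vert, List.take_append_of_le_length h]
lemma vert_add (l : List Pt) (j i : ℕ) :
    vert l (j + i) = vert l j + vert (l.drop j) i := by
  rw [vert, vert, vert, List.take_add, List.sum_append]
lemma vert_take (l : List Pt) {j i : ℕ} (h : i ≤ j) :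
    vert (l.take j) i = vert l i := by
  simp [vert, List.take_take, min_eq_left h]

/-- The finite set of all lists of length `n` with entries in `S`. -/
noncomputable def allLists (S : Finset Pt) (n : ℕ) : Finset (List Pt) :=
  Finset.image (fun f : Fin n → {x // x ∈ S} => List.ofFn (fun i => ((f i : Pt)))) Finset.univ

lemma mem_allLists {S : Finset Pt} {n : ℕ} {l : List Pt} :
    l ∈ allLists S n ↔ l.length = n ∧ StepsIn S l := by
  constructor
  · rintro h
    simp only [allLists, Finset.mem_image, Finset.mem_univ, true_and] at h
    obtain ⟨f, rfl⟩ := h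
    refine ⟨by simp, ?_⟩
    intro s hs
    simp only [List.mem_ofFn] at hs
    obtain ⟨i, rfl⟩ := hs
    exact (f i).2
  · rintro ⟨rfl, hst⟩
    simp only [allLists, Finset.mem_image, Finset.mem_univ, true_and]
    refine ⟨fun i => ⟨l.get i, hst _ (List.get_mem l i)⟩, ?_⟩
    exact (List.ofFn_get l)

/-- Generic generating function of walks with a weight. -/
noncomputable def gfW (S : Finset Pt) {G : Type} [AddCommMonoid G]
    (wt : List Pt → G) (Φ : List Pt → Prop) : PowerSeries (AddMonoidAlgebra ℝ G) :=
  PowerSeries.mk fun n =>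
    ∑ l ∈ (allLists S n).filter Φ, AddMonoidAlgebra.single (wt l) (1 : ℝ)

lemma gfW_coeff_apply (S : Finset Pt) {G : Type} [AddCommMonoid G]
    (wt : List Pt → G) (Φ : List Pt → Prop) (n : ℕ) (e : G) :
    (PowerSeries.coeff n (gfW S wt Φ)).coeff e
      = ((allLists S n).filter (fun l => Φ l ∧ wt l = e)).card := by
  classical
  rw [gfW, PowerSeries.coeff_mk]
  rw [AddMonoidAlgebra.coeff_sum, Finset.sum_apply']
  rw [← Finset.filter_filter]
  simp [AddMonoidAlgebra.coeff_single, Finsupp.single_apply, Finset.sum_boole]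

end SlitPlane

namespace SlitPlane2
end SlitPlane2
namespace SlitPlane

lemma count_eq (S : Finset Pt) (Φ : List Pt → Prop) (n : ℕ) (e : Pt) :
    Set.ncard {l : List Pt | l.length = n ∧ StepsIn S l ∧ Φ l ∧ l.sum = e}
      = ((allLists S n).filter (fun l => Φ l ∧ l.sum = e)).card := by
  rw [← Set.ncard_coe_finset]
  congr 1
  ext l
  simp only [Finset.coe_filter, Set.mem_setOf_eq, mem_allLists]
  tauto

lemma stepsIn_append {S : Finset Pt} {a b : List Pt} :
    StepsIn S (a ++ b) ↔ StepsIn S a ∧ StepsIn S b := by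
  simp only [StepsIn, List.mem_append]
  constructor
  · exact fun h => ⟨fun s hs => h s (Or.inl hs), fun s hs => h s (Or.inr hs)⟩
  · rintro ⟨h1, h2⟩ s (hs | hs)
    exacts [h1 s hs, h2 s hs]

lemma allLists_zero (S : Finset Pt) : allLists S 0 = {([] : List Pt)} := by
  ext l
  simp only [mem_allLists, Finset.mem_singleton, List.length_eq_zero_iff]
  exact ⟨fun h => h.1, by rintro rfl; exact ⟨rfl, fun s hs => absurd hs List.not_mem_nil⟩⟩

lemma gfW_coeff_zero (S : Finset Pt) {G : Type} [AddCommMonoid G]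
    (wt : List Pt → G) (Φ : List Pt → Prop) (hw : wt [] = 0) (h : Φ []) :
    PowerSeries.coeff 0 (gfW S wt Φ) = 1 := by
  rw [gfW, coeff_mk, allLists_zero]
  rw [Finset.filter_singleton, if_pos h, Finset.sum_singleton, hw]
  rfl

lemma gfW_mul (S : Finset Pt) {G : Type} [AddCommMonoid G] (wt : List Pt → G)
    (hwt : ∀ a b : List Pt, wt (a ++ b) = wt a + wt b)
    (Φ Φ1 Φ2 : List Pt → Prop)
    (hsplit : ∀ l, Φ l → ∃ p q : List Pt, l = p ++ q ∧ Φ1 p ∧ Φ2 q)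
    (huniq : ∀ p q p' q' : List Pt,
      Φ1 p → Φ2 q → Φ1 p' → Φ2 q' → p ++ q = p' ++ q' → p = p')
    (hglue : ∀ p q : List Pt, Φ1 p → Φ2 q → Φ (p ++ q)) :
    gfW S wt Φ = gfW S wt Φ1 * gfW S wt Φ2 := by
  refine PowerSeries.ext fun n => ?_
  rw [PowerSeries.coeff_mul]
  simp only [gfW, coeff_mk]
  have step1 : ∀ p : ℕ × ℕ,
      (∑ a ∈ (allLists S p.1).filter Φ1, AddMonoidAlgebra.single (wt a) (1:ℝ)) *
      (∑ b ∈ (allLists S p.2).filter Φ2, AddMonoidAlgebra.single (wt b) (1:ℝ))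
      = ∑ ab ∈ ((allLists S p.1).filter Φ1) ×ˢ ((allLists S p.2).filter Φ2),
          AddMonoidAlgebra.single (wt ab.1 + wt ab.2) (1:ℝ) := by
    intro p
    rw [Finset.sum_mul_sum]
    rw [Finset.sum_product]
    simp [AddMonoidAlgebra.single_mul_single]
  simp only [step1]
  rw [Finset.sum_sigma']
  refine (Finset.sum_bij (fun x _ => x.2.1 ++ x.2.2) ?_ ?_ ?_ ?_).symm
  · rintro ⟨⟨k, m⟩, a, b⟩ hx
    simp only [Finset.mem_sigma, Finset.mem_product, Finset.mem_filter,
      Finset.HasAntidiagonal.mem_antidiagonal, mem_allLists] at hx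
    obtain ⟨hkm, ⟨⟨hak, has⟩, ha1⟩, ⟨⟨hbm, hbs⟩, hb2⟩⟩ := hx
    simp only [Finset.mem_filter, mem_allLists]
    refine ⟨⟨by simp [hak, hbm, hkm], stepsIn_append.2 ⟨has, hbs⟩⟩, hglue _ _ ha1 hb2⟩
  · rintro ⟨⟨k, m⟩, a, b⟩ hx ⟨⟨k', m'⟩, a', b'⟩ hx' heq
    simp only [Finset.mem_sigma, Finset.mem_product, Finset.mem_filter,
      Finset.HasAntidiagonal.mem_antidiagonal, mem_allLists] at hx hx'
    obtain ⟨hkm, ⟨⟨hak, has⟩, ha1⟩, ⟨⟨hbm, hbs⟩, hb2⟩⟩ := hx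
    obtain ⟨hkm', ⟨⟨hak', has'⟩, ha1'⟩, ⟨⟨hbm', hbs'⟩, hb2'⟩⟩ := hx'
    have haa : a = a' := huniq a b a' b' ha1 hb2 ha1' hb2' heq
    subst haa
    have hbb : b = b' := List.append_cancel_left heq
    subst hbb
    simp [← hak, ← hbm, ← hak', ← hbm']
  · intro l hl
    simp only [Finset.mem_filter, mem_allLists] at hl
    obtain ⟨⟨hln, hls⟩, hlΦ⟩ := hl
    obtain ⟨p, q, rfl, h1, h2⟩ := hsplit l hlΦ
    refine ⟨⟨⟨p.length, q.length⟩, p, q⟩, ?_, rfl⟩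
    simp only [Finset.mem_sigma, Finset.mem_product, Finset.mem_filter,
      Finset.HasAntidiagonal.mem_antidiagonal, mem_allLists]
    have := stepsIn_append.1 hls
    exact ⟨by simpa using hln, ⟨⟨by simp, this.1⟩, h1⟩, ⟨⟨by simp, this.2⟩, h2⟩⟩
  · rintro ⟨⟨k, m⟩, a, b⟩ _
    rw [hwt]

end SlitPlane

namespace SlitPlane

/-- Walks ending on the `x`-axis. -/
def Bil (l : List Pt) : Prop := l.sum.2 = 0
/-- The class `𝒫`: walks ending on the axis at their strictly leftmost axis point. -/
def Pprop (l : List Pt) : Prop :=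
  l.sum.2 = 0 ∧ ∀ i < l.length, ¬((vert l i).2 = 0 ∧ (vert l i).1 ≤ l.sum.1)
/-- The class `𝒞`: loops. -/
def Cprop (l : List Pt) : Prop :=
  (∀ i ≤ l.length, ¬ OnNegAxis (vert l i)) ∧ l.sum = 0
/-- The class `𝒞 ⋆ 𝒬`: walks avoiding the strictly negative axis. -/
def Phi23 (l : List Pt) : Prop := ∀ i ≤ l.length, ¬ OnNegAxis (vert l i)

lemma onH_of_onNegAxis {p : Pt} (h : OnNegAxis p) : OnH p := ⟨h.1, le_of_lt h.2⟩

lemma vert_append_sum (p r : List Pt) (i : ℕ) :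
    vert (p ++ r) (p.length + i) = p.sum + vert r i := by
  rw [vert_add, List.drop_left, vert_append_left _ _ (le_refl _), vert_length]

lemma split1_exists (l : List Pt) (h : Phi23 l) :
    ∃ c q : List Pt, l = c ++ q ∧ Cprop c ∧ AvoidsH q := by
  classical
  set n := l.length with hn
  set T := (Finset.range (n+1)).filter (fun i => vert l i = 0) with hT
  have hT0 : (0:ℕ) ∈ T := by simp [hT, vert_zero]
  set j := T.max' ⟨0, hT0⟩ with hj
  have hjT : j ∈ T := T.max'_mem _
  have hjle : j ≤ n := by
    have := (Finset.mem_filter.1 hjT).1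
    simpa [Nat.lt_succ_iff] using Finset.mem_range.1 this
  have hvj : vert l j = 0 := (Finset.mem_filter.1 hjT).2
  have hmax : ∀ i, i ≤ n → vert l i = 0 → i ≤ j := by
    intro i hi hv
    exact Finset.le_max' T i (Finset.mem_filter.2 ⟨Finset.mem_range.2 (Nat.lt_succ_of_le hi), hv⟩)
  refine ⟨l.take j, l.drop j, (List.take_append_drop j l).symm, ⟨?_, hvj⟩, ?_⟩
  · intro i hi
    have hlen : (l.take j).length = j := by simp [List.length_take, min_eq_left hjle]; omega
    rw [hlen] at hi
    rw [vert_take l hi]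
    exact h i (le_trans hi hjle)
  · intro i hi1 hi2
    have hlen : (l.drop j).length = n - j := by simp [hn]
    rw [hlen] at hi2
    have hji : j + i ≤ n := by omega
    have hv : vert l (j + i) = vert (l.drop j) i := by
      rw [vert_add, hvj, zero_add]
    rintro ⟨hy, hx⟩
    rcases lt_or_eq_of_le hx with hx | hx
    · exact h (j + i) hji (by rw [hv]; exact ⟨hy, hx⟩)
    · have hzero : vert (l.drop j) i = 0 := Prod.ext_iff.2 ⟨hx, hy⟩
      have : j + i ≤ j := hmax _ hji (by rw [hv, hzero])
      omega

lemma split1_uniq_aux {c q c' q' : List Pt} (hc : Cprop c) (hq : AvoidsH q)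
    (hc' : Cprop c') (hq' : AvoidsH q') (heq : c ++ q = c' ++ q')
    (hlt : c.length < c'.length) : False := by
  set j := c.length
  set j' := c'.length
  have hj'len : j' ≤ c.length + q.length := by
    have := congrArg List.length heq
    simp only [List.length_append] at this
    omega
  have h1 : vert (c ++ q) j' = 0 := by
    rw [heq, vert_append_left _ _ (le_refl _), vert_length, hc'.2]
  have h2 : vert (c ++ q) (c.length + (j' - j)) = c.sum + vert q (j' - j) :=
    vert_append_sum _ _ _
  have h3 : vert q (j' - j) = 0 := by
    have he : c.length + (j' - j) = j' := by omega
    rw [he] at h2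
    rw [h2, hc.2, zero_add] at h1; exact h1
  have := hq (j' - j) (by omega) (by omega)
  rw [h3] at this
  exact this ⟨rfl, le_refl 0⟩

lemma split1_uniq (c q c' q' : List Pt) (hc : Cprop c) (hq : AvoidsH q)
    (hc' : Cprop c') (hq' : AvoidsH q') (heq : c ++ q = c' ++ q') : c = c' := by
  rcases lt_trichotomy c.length c'.length with h | h | h
  · exact absurd (split1_uniq_aux hc hq hc' hq' heq h) (by simp)
  · exact (List.append_inj heq h).1
  · exact absurd (split1_uniq_aux hc' hq' hc hq heq.symm h) (by simp)

lemma split1_glue (c q : List Pt) (hc : Cprop c) (hq : AvoidsH q) : Phi23 (c ++ q) := by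
  intro i hi
  rcases le_or_gt i c.length with h | h
  · rw [vert_append_left _ _ h]
    exact hc.1 i h
  · have hi' : i = c.length + (i - c.length) := by omega
    rw [hi', vert_append_sum, hc.2, zero_add]
    intro hna
    refine hq (i - c.length) (by omega) ?_ (onH_of_onNegAxis hna)
    have := hi
    simp only [List.length_append] at this
    omega

lemma split2_exists (l : List Pt) :
    ∃ p r : List Pt, l = p ++ r ∧ Pprop p ∧ Phi23 r := by
  classical
  set n := l.length with hn
  set T := (Finset.range (n+1)).filter (fun i => (vert l i).2 = 0) with hT
  have hT0 : (0:ℕ) ∈ T := by simp [hT, vert_zero, Prod.snd_zero]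
  have hTn : T.Nonempty := ⟨0, hT0⟩
  set M := T.image (fun i => (vert l i).1) with hM
  have hMn : M.Nonempty := hTn.image _
  set m := M.min' hMn with hm
  have hmmem : m ∈ M := M.min'_mem hMn
  obtain ⟨i0, hi0T, hi0⟩ := Finset.mem_image.1 hmmem
  set T' := T.filter (fun i => (vert l i).1 = m) with hT'
  have hT'n : T'.Nonempty := ⟨i0, Finset.mem_filter.2 ⟨hi0T, hi0⟩⟩
  set i₁ := T'.min' hT'n with hi₁
  have hi₁T' : i₁ ∈ T' := T'.min'_mem _
  have hi₁T : i₁ ∈ T := (Finset.mem_filter.1 hi₁T').1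
  have hi₁le : i₁ ≤ n := by
    have := (Finset.mem_filter.1 hi₁T).1
    simpa [Nat.lt_succ_iff] using Finset.mem_range.1 this
  have hv2 : (vert l i₁).2 = 0 := (Finset.mem_filter.1 hi₁T).2
  have hv1 : (vert l i₁).1 = m := (Finset.mem_filter.1 hi₁T').2
  have hmin_m : ∀ i, i ≤ n → (vert l i).2 = 0 → m ≤ (vert l i).1 := by
    intro i hi hv
    refine Finset.min'_le M _ (Finset.mem_image.2 ⟨i, ?_, rfl⟩)
    exact Finset.mem_filter.2 ⟨Finset.mem_range.2 (Nat.lt_succ_of_le hi), hv⟩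
  have hmin_i : ∀ i, i ≤ n → (vert l i).2 = 0 → (vert l i).1 = m → i₁ ≤ i := by
    intro i hi hv hv1'
    refine T'.min'_le _ (Finset.mem_filter.2 ⟨?_, hv1'⟩)
    exact Finset.mem_filter.2 ⟨Finset.mem_range.2 (Nat.lt_succ_of_le hi), hv⟩
  have hsum : (l.take i₁).sum = vert l i₁ := rfl
  refine ⟨l.take i₁, l.drop i₁, (List.take_append_drop i₁ l).symm, ⟨?_, ?_⟩, ?_⟩
  · rw [hsum]; exact hv2
  · intro i hilen
    have hlen : (l.take i₁).length = i₁ := by simp [List.length_take, min_eq_left hi₁le]; omega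
    rw [hlen] at hilen
    rw [vert_take l (le_of_lt hilen), hsum]
    rintro ⟨hy, hx⟩
    have hiT : i ≤ n := le_trans (le_of_lt hilen) hi₁le
    have h1 : m ≤ (vert l i).1 := hmin_m i hiT hy
    have h2 : (vert l i).1 = m := le_antisymm (by rw [← hv1] at h1 ⊢; exact le_trans hx (le_refl _)) h1
    have := hmin_i i hiT hy h2
    omega
  · intro i hilen
    have hlen : (l.drop i₁).length = n - i₁ := by simp [hn]
    rw [hlen] at hilen
    rintro ⟨hy, hx⟩
    have hadd : vert l (i₁ + i) = vert l i₁ + vert (l.drop i₁) i := vert_add l i₁ i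
    have h2 : (vert l (i₁ + i)).2 = 0 := by
      rw [hadd, Prod.snd_add, hv2, hy, add_zero]
    have h1 : m ≤ (vert l (i₁ + i)).1 := hmin_m _ (by omega) h2
    rw [hadd, Prod.fst_add, hv1] at h1
    omega

lemma split2_uniq_aux {p r p' r' : List Pt} (hp : Pprop p) (hr : Phi23 r)
    (hp' : Pprop p') (hr' : Phi23 r') (heq : p ++ r = p' ++ r')
    (hlt : p.length < p'.length) : False := by
  set j := p.length
  set j' := p'.length
  have hj'len : j' ≤ p.length + r.length := by
    have := congrArg List.length heq
    simp only [List.length_append] at this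
    omega
  have hvj : vert (p ++ r) j = p.sum := by
    rw [vert_append_left _ _ (le_refl _), vert_length]
  have hvj' : vert (p ++ r) j' = p'.sum := by
    rw [heq, vert_append_left _ _ (le_refl _), vert_length]
  -- vert p' j = p.sum
  have hvpj : vert p' j = p.sum := by
    have : vert (p' ++ r') j = vert p' j := vert_append_left _ _ (le_of_lt hlt)
    rw [← this, ← heq, hvj]
  have hlt1 : p'.sum.1 < p.sum.1 := by
    have := hp'.2 j hlt
    rw [hvpj] at this
    push_neg at this
    exact this hp.1
  have h2 : vert (p ++ r) (p.length + (j' - j)) = p.sum + vert r (j' - j) :=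
    vert_append_sum _ _ _
  have h3 : vert r (j' - j) = p'.sum - p.sum := by
    have he : p.length + (j' - j) = j' := by omega
    rw [he] at h2
    rw [hvj'] at h2
    exact eq_sub_of_add_eq' h2.symm
  refine hr (j' - j) (by omega) ?_
  rw [h3]
  exact ⟨by rw [Prod.snd_sub, hp'.1, hp.1, sub_zero], by rw [Prod.fst_sub]; omega⟩

lemma split2_uniq (p r p' r' : List Pt) (hp : Pprop p) (hr : Phi23 r)
    (hp' : Pprop p') (hr' : Phi23 r') (heq : p ++ r = p' ++ r') : p = p' := by
  rcases lt_trichotomy p.length p'.length with h | h | h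
  · exact absurd (split2_uniq_aux hp hr hp' hr' heq h) (by simp)
  · exact (List.append_inj heq h).1
  · exact absurd (split2_uniq_aux hp' hr' hp hr heq.symm h) (by simp)

end SlitPlane

namespace SlitPlane

lemma K_mul_gf_top (S : Finset Pt) :
    Kpoly S * gfW S List.sum (fun _ => True) = 1 := by
  refine PowerSeries.ext fun n => ?_
  cases n with
  | zero =>
      rw [PowerSeries.coeff_zero_eq_constantCoeff, map_mul]
      have h1 : constantCoeff (R := E2) (Kpoly S) = 1 := by
        simp [Kpoly, map_sub, map_mul]
      have h2 : constantCoeff (R := E2) (gfW S List.sum (fun _ => True)) = 1 := by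
        rw [← PowerSeries.coeff_zero_eq_constantCoeff]
        exact gfW_coeff_zero _ _ _ rfl trivial
      simp [h1, h2]
  | succ n =>
      have hK : Kpoly S * gfW S List.sum (fun _ => True)
          = gfW S List.sum (fun _ => True)
            - PowerSeries.X * (PowerSeries.C (R := E2) (∑ s ∈ S, AddMonoidAlgebra.single s (1:ℝ))
              * gfW S List.sum (fun _ => True)) := by
        rw [Kpoly]; ring
      rw [hK, map_sub, PowerSeries.coeff_succ_X_mul]
      have hC : (PowerSeries.coeff (R := E2) n) (PowerSeries.C (R := E2)
            (∑ s ∈ S, AddMonoidAlgebra.single s (1:ℝ)) * gfW S List.sum (fun _ => True))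
          = (∑ s ∈ S, AddMonoidAlgebra.single s (1:ℝ))
            * (PowerSeries.coeff (R := E2) n) (gfW S List.sum (fun _ => True)) := by
        rw [← PowerSeries.smul_eq_C_mul, map_smul, smul_eq_mul]
      rw [hC]
      have main : (PowerSeries.coeff (R := E2) (n+1)) (gfW S List.sum (fun _ => True))
          = (∑ s ∈ S, AddMonoidAlgebra.single s (1:ℝ))
            * (PowerSeries.coeff (R := E2) n) (gfW S List.sum (fun _ => True)) := by
        simp only [gfW, coeff_mk]
        rw [Finset.sum_mul_sum]
        rw [← Finset.sum_product']
        refine (Finset.sum_bij (fun x _ => x.1 :: x.2) ?_ ?_ ?_ ?_).symm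
        · rintro ⟨s, l⟩ hx
          simp only [Finset.mem_product, Finset.mem_filter, mem_allLists] at hx
          obtain ⟨hs, ⟨hl, hst⟩, -⟩ := hx
          simp only [Finset.mem_filter, mem_allLists]
          refine ⟨⟨by simp [hl], ?_⟩, trivial⟩
          intro x hx
          rcases List.mem_cons.1 hx with rfl | hx
          · exact hs
          · exact hst x hx
        · rintro ⟨s, l⟩ _ ⟨s', l'⟩ _ heq
          simp only [List.cons.injEq] at heq
          simp [heq.1, heq.2]
        · intro l hl
          simp only [Finset.mem_filter, mem_allLists] at hl
          obtain ⟨⟨hl, hst⟩, -⟩ := hl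
          cases l with
          | nil => simp at hl
          | cons s t =>
              refine ⟨⟨s, t⟩, ?_, rfl⟩
              simp only [Finset.mem_product, Finset.mem_filter, mem_allLists]
              exact ⟨hst s (List.mem_cons_self),
                ⟨⟨by simpa using hl, fun x hx => hst x (List.mem_cons_of_mem s hx)⟩, trivial⟩⟩
        · rintro ⟨s, l⟩ _
          simp [AddMonoidAlgebra.single_mul_single]
      rw [main]
      simp

lemma gfW_coeff_apply' (S : Finset Pt) (Φ : List Pt → Prop) (n : ℕ) (e : Pt) :
    (PowerSeries.coeff n (gfW S List.sum Φ)).coeff e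
      = (Set.ncard {l : List Pt | l.length = n ∧ StepsIn S l ∧ Φ l ∧ l.sum = e} : ℝ) := by
  rw [gfW_coeff_apply, count_eq]
  congr

lemma iotaX_apply (f : E1) : (iotaX f).coeff = Finsupp.mapDomain (fun i : ℤ => ((i, 0) : Pt)) f.coeff := by
  rw [iotaX]
  rfl

lemma iotaX_coeff_eq (f : E1) (i j : ℤ) :
    (iotaX f).coeff (i, j) = if j = 0 then f.coeff i else 0 := by
  rw [iotaX_apply]
  by_cases hj : j = 0
  · subst hj
    rw [if_pos rfl]
    exact Finsupp.mapDomain_apply (fun a b hab => by simpa using (Prod.mk.injEq _ _ _ _ ▸ hab).1) f.coeff i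
  · rw [if_neg hj]
    refine Finsupp.mapDomain_notin_range _ _ ?_
    rintro ⟨a, ha⟩
    exact hj ((Prod.mk.injEq _ _ _ _ ▸ ha).2.symm)

/-- Identification of a bilateral `E1` power series with an `E2` walk GF. -/
lemma map_iotaX_eq_gf (S : Finset Pt) (B : PowerSeries E1)
    (Φ : List Pt → Prop) (hΦ : ∀ l, Φ l → Bil l)
    (hB : ∀ (n : ℕ) (i : ℤ), (PowerSeries.coeff (R := E1) n B).coeff i
        = (Set.ncard {l : List Pt | l.length = n ∧ StepsIn S l ∧ Φ l ∧ l.sum = ((i:ℤ), (0:ℤ))} : ℝ)) :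
    PowerSeries.map iotaX B = gfW S List.sum Φ := by
  refine PowerSeries.ext fun n => AddMonoidAlgebra.ext <| Finsupp.ext fun e => ?_
  obtain ⟨i, j⟩ := e
  rw [PowerSeries.coeff_map, iotaX_coeff_eq, gfW_coeff_apply']
  by_cases hj : j = 0
  · subst hj
    rw [if_pos rfl, hB]
  · rw [if_neg hj]
    have hset : {l : List Pt | l.length = n ∧ StepsIn S l ∧ Φ l ∧ l.sum = ((i:ℤ), j)} = ∅ := by
      ext l
      simp only [Set.mem_setOf_eq, Set.mem_empty_iff_false, iff_false]
      rintro ⟨-, -, h1, h2⟩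
      exact hj (by have := hΦ l h1; rw [Bil, h2] at this; exact this)
    rw [hset, Set.ncard_empty]
    simp

lemma Sgf_eq (S : Finset Pt) (Sgf : PowerSeries E2)
    (hS : ∀ (n : ℕ) (e : Pt), (PowerSeries.coeff (R := E2) n Sgf).coeff e = (slitCount S n e : ℝ)) :
    Sgf = gfW S List.sum AvoidsH := by
  refine PowerSeries.ext fun n => AddMonoidAlgebra.ext <| Finsupp.ext fun e => ?_
  rw [hS, gfW_coeff_apply']
  rfl

lemma mapL_eq (S : Finset Pt) (L : PowerSeries ℝ)
    (hL : ∀ n : ℕ, PowerSeries.coeff (R := ℝ) n L = (loopCount S n : ℝ)) :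
    PowerSeries.map (algebraMap ℝ E2) L = gfW S List.sum Cprop := by
  refine PowerSeries.ext fun n => AddMonoidAlgebra.ext <| Finsupp.ext fun e => ?_
  rw [PowerSeries.coeff_map, gfW_coeff_apply']
  have halg : (algebraMap ℝ E2) ((PowerSeries.coeff (R := ℝ) n) L)
      = AddMonoidAlgebra.single 0 ((PowerSeries.coeff (R := ℝ) n) L) := by
    rw [AddMonoidAlgebra.coe_algebraMap]
    simp
  rw [halg, AddMonoidAlgebra.coeff_single, Finsupp.single_apply]
  by_cases he : (0 : Pt) = e
  · rw [if_pos he, hL]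
    subst he
    rw [loopCount]
    have hset : {l : List Pt | l.length = n ∧ StepsIn S l ∧ Cprop l ∧ l.sum = 0}
        = {l : List Pt | l.length = n ∧ StepsIn S l ∧
            (∀ i ≤ l.length, ¬ OnNegAxis (vert l i)) ∧ l.sum = (0, 0)} := by
      ext l
      simp only [Set.mem_setOf_eq, Cprop]
      constructor
      · rintro ⟨h0, h1, ⟨h2, h3⟩, h4⟩
        exact ⟨h0, h1, h2, by rw [h4]; rfl⟩
      · rintro ⟨h0, h1, h2, h3⟩
        exact ⟨h0, h1, ⟨h2, by rw [h3]; rfl⟩, by rw [h3]; rfl⟩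
    rw [hset]
  · rw [if_neg he]
    have hset : {l : List Pt | l.length = n ∧ StepsIn S l ∧ Cprop l ∧ l.sum = e} = ∅ := by
      ext l
      simp only [Set.mem_setOf_eq, Set.mem_empty_iff_false, iff_false]
      rintro ⟨-, -, h1, h2⟩
      exact he (by rw [← h1.2, h2])
    rw [hset, Set.ncard_empty]
    simp

end SlitPlane

namespace SlitPlane

lemma coeff_mul_congr {R : Type} [CommRing R] (U V U' V' : PowerSeries R) (n : ℕ)
    (hU0 : PowerSeries.coeff (R := R) 0 U = 0) (hU0' : PowerSeries.coeff (R := R) 0 U' = 0)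
    (hV0 : PowerSeries.coeff (R := R) 0 V = 0) (hV0' : PowerSeries.coeff (R := R) 0 V' = 0)
    (hU : ∀ k < n, PowerSeries.coeff (R := R) k U = PowerSeries.coeff (R := R) k U')
    (hV : ∀ k < n, PowerSeries.coeff (R := R) k V = PowerSeries.coeff (R := R) k V') :
    PowerSeries.coeff (R := R) n (U * V) = PowerSeries.coeff (R := R) n (U' * V') := by
  rw [PowerSeries.coeff_mul, PowerSeries.coeff_mul]
  refine Finset.sum_congr rfl fun p hp => ?_
  have hpn : p.1 + p.2 = n := Finset.HasAntidiagonal.mem_antidiagonal.1 hp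
  by_cases h1 : p.1 = 0
  · rw [h1, hU0, hU0', zero_mul, zero_mul]
  · by_cases h2 : p.2 = 0
    · rw [h2, hV0, hV0', mul_zero, mul_zero]
    · rw [hU p.1 (by omega), hV p.2 (by omega)]

lemma factorization_uniq (A0 Ap Am A0' Ap' Am' : PowerSeries E2)
    (h0 : ∀ n : ℕ, 1 ≤ n → ∀ e : Pt, e ≠ 0 → (PowerSeries.coeff (R := E2) n A0).coeff e = 0)
    (h0' : ∀ n : ℕ, 1 ≤ n → ∀ e : Pt, e ≠ 0 → (PowerSeries.coeff (R := E2) n A0').coeff e = 0)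
    (hp : ∀ n : ℕ, 1 ≤ n → ∀ e : Pt, ¬(e.2 = 0 ∧ 0 < e.1) → (PowerSeries.coeff (R := E2) n Ap).coeff e = 0)
    (hp' : ∀ n : ℕ, 1 ≤ n → ∀ e : Pt, ¬(e.2 = 0 ∧ 0 < e.1) → (PowerSeries.coeff (R := E2) n Ap').coeff e = 0)
    (hm : ∀ n : ℕ, 1 ≤ n → ∀ e : Pt, ¬(e.2 = 0 ∧ e.1 < 0) → (PowerSeries.coeff (R := E2) n Am).coeff e = 0)
    (hm' : ∀ n : ℕ, 1 ≤ n → ∀ e : Pt, ¬(e.2 = 0 ∧ e.1 < 0) → (PowerSeries.coeff (R := E2) n Am').coeff e = 0)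
    (c0 : PowerSeries.coeff (R := E2) 0 A0 = 1) (c0' : PowerSeries.coeff (R := E2) 0 A0' = 1)
    (cp : PowerSeries.coeff (R := E2) 0 Ap = 1) (cp' : PowerSeries.coeff (R := E2) 0 Ap' = 1)
    (cm : PowerSeries.coeff (R := E2) 0 Am = 1) (cm' : PowerSeries.coeff (R := E2) 0 Am' = 1)
    (heq : A0 * Ap * Am = A0' * Ap' * Am') :
    A0 = A0' ∧ Ap = Ap' ∧ Am = Am' := by
  set U0 := A0 - 1 with hU0d
  set Up := Ap - 1 with hUpd
  set Um := Am - 1 with hUmd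
  set U0' := A0' - 1 with hU0d'
  set Up' := Ap' - 1 with hUpd'
  set Um' := Am' - 1 with hUmd'
  have z0 : PowerSeries.coeff (R := E2) 0 U0 = 0 := by rw [hU0d, map_sub, c0]; simp
  have zp : PowerSeries.coeff (R := E2) 0 Up = 0 := by rw [hUpd, map_sub, cp]; simp
  have zm : PowerSeries.coeff (R := E2) 0 Um = 0 := by rw [hUmd, map_sub, cm]; simp
  have z0' : PowerSeries.coeff (R := E2) 0 U0' = 0 := by rw [hU0d', map_sub, c0']; simp
  have zp' : PowerSeries.coeff (R := E2) 0 Up' = 0 := by rw [hUpd', map_sub, cp']; simp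
  have zm' : PowerSeries.coeff (R := E2) 0 Um' = 0 := by rw [hUmd', map_sub, cm']; simp
  have expand : A0 * Ap * Am
      = 1 + (U0 + Up + Um) + (U0*Up + U0*Um + Up*Um + U0*(Up*Um)) := by
    rw [hU0d, hUpd, hUmd]; ring
  have expand' : A0' * Ap' * Am'
      = 1 + (U0' + Up' + Um') + (U0'*Up' + U0'*Um' + Up'*Um' + U0'*(Up'*Um')) := by
    rw [hU0d', hUpd', hUmd']; ring
  have key : ∀ n : ℕ, PowerSeries.coeff (R := E2) n A0 = PowerSeries.coeff (R := E2) n A0'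
      ∧ PowerSeries.coeff (R := E2) n Ap = PowerSeries.coeff (R := E2) n Ap'
      ∧ PowerSeries.coeff (R := E2) n Am = PowerSeries.coeff (R := E2) n Am' := by
    intro n
    induction n using Nat.strong_induction_on with
    | _ n ih =>
      rcases Nat.eq_zero_or_pos n with rfl | hn
      · exact ⟨by rw [c0, c0'], by rw [cp, cp'], by rw [cm, cm']⟩
      have ih0 : ∀ k < n, PowerSeries.coeff (R := E2) k U0 = PowerSeries.coeff (R := E2) k U0' := by
        intro k hk
        rw [hU0d, hU0d', map_sub, map_sub, (ih k hk).1]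
      have ihp : ∀ k < n, PowerSeries.coeff (R := E2) k Up = PowerSeries.coeff (R := E2) k Up' := by
        intro k hk
        rw [hUpd, hUpd', map_sub, map_sub, (ih k hk).2.1]
      have ihm : ∀ k < n, PowerSeries.coeff (R := E2) k Um = PowerSeries.coeff (R := E2) k Um' := by
        intro k hk
        rw [hUmd, hUmd', map_sub, map_sub, (ih k hk).2.2]
      have e1 : PowerSeries.coeff (R := E2) n (U0*Up) = PowerSeries.coeff (R := E2) n (U0'*Up') :=
        coeff_mul_congr _ _ _ _ n z0 z0' zp zp' ih0 ihp
      have e2 : PowerSeries.coeff (R := E2) n (U0*Um) = PowerSeries.coeff (R := E2) n (U0'*Um') :=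
        coeff_mul_congr _ _ _ _ n z0 z0' zm zm' ih0 ihm
      have e3 : PowerSeries.coeff (R := E2) n (Up*Um) = PowerSeries.coeff (R := E2) n (Up'*Um') :=
        coeff_mul_congr _ _ _ _ n zp zp' zm zm' ihp ihm
      have zpm : PowerSeries.coeff (R := E2) 0 (Up*Um) = 0 := by
        rw [PowerSeries.coeff_zero_eq_constantCoeff, map_mul,
          ← PowerSeries.coeff_zero_eq_constantCoeff, zp]
        simp
      have zpm' : PowerSeries.coeff (R := E2) 0 (Up'*Um') = 0 := by
        rw [PowerSeries.coeff_zero_eq_constantCoeff, map_mul,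
          ← PowerSeries.coeff_zero_eq_constantCoeff, zp']
        simp
      have e4 : PowerSeries.coeff (R := E2) n (U0*(Up*Um)) = PowerSeries.coeff (R := E2) n (U0'*(Up'*Um')) := by
        refine coeff_mul_congr _ _ _ _ n z0 z0' zpm zpm' ih0 ?_
        intro k hk
        exact coeff_mul_congr _ _ _ _ k zp zp' zm zm' (fun j hj => ihp j (by omega))
          (fun j hj => ihm j (by omega))
      have hco : PowerSeries.coeff (R := E2) n (A0*Ap*Am) = PowerSeries.coeff (R := E2) n (A0'*Ap'*Am') := by
        rw [heq]
      rw [expand, expand'] at hco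
      simp only [map_add] at hco
      rw [e1, e2, e3, e4] at hco
      have hsum : PowerSeries.coeff (R := E2) n U0 + PowerSeries.coeff (R := E2) n Up
            + PowerSeries.coeff (R := E2) n Um
          = PowerSeries.coeff (R := E2) n U0' + PowerSeries.coeff (R := E2) n Up'
            + PowerSeries.coeff (R := E2) n Um' := by
        have := hco
        abel_nf at this ⊢
        linear_combination this
      -- convert U-coefficients to A-coefficients (n ≥ 1 so coeff n 1 = 0)
      have hone : PowerSeries.coeff (R := E2) n (1 : PowerSeries E2) = 0 := by
        rw [PowerSeries.coeff_one, if_neg (by omega)]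
      have cU0 : PowerSeries.coeff (R := E2) n U0 = PowerSeries.coeff (R := E2) n A0 := by
        rw [hU0d, map_sub, hone, sub_zero]
      have cUp : PowerSeries.coeff (R := E2) n Up = PowerSeries.coeff (R := E2) n Ap := by
        rw [hUpd, map_sub, hone, sub_zero]
      have cUm : PowerSeries.coeff (R := E2) n Um = PowerSeries.coeff (R := E2) n Am := by
        rw [hUmd, map_sub, hone, sub_zero]
      have cU0' : PowerSeries.coeff (R := E2) n U0' = PowerSeries.coeff (R := E2) n A0' := by
        rw [hU0d', map_sub, hone, sub_zero]
      have cUp' : PowerSeries.coeff (R := E2) n Up' = PowerSeries.coeff (R := E2) n Ap' := by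
        rw [hUpd', map_sub, hone, sub_zero]
      have cUm' : PowerSeries.coeff (R := E2) n Um' = PowerSeries.coeff (R := E2) n Am' := by
        rw [hUmd', map_sub, hone, sub_zero]
      rw [cU0, cUp, cUm, cU0', cUp', cUm'] at hsum
      have happ : ∀ e : Pt,
          (PowerSeries.coeff (R := E2) n A0).coeff e + (PowerSeries.coeff (R := E2) n Ap).coeff e
            + (PowerSeries.coeff (R := E2) n Am).coeff e
          = (PowerSeries.coeff (R := E2) n A0').coeff e + (PowerSeries.coeff (R := E2) n Ap').coeff e
            + (PowerSeries.coeff (R := E2) n Am').coeff e := by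
        intro e
        have := congrArg (fun f : E2 => f.coeff e) hsum
        simpa [AddMonoidAlgebra.coeff_add, Finsupp.add_apply] using this
      refine ⟨AddMonoidAlgebra.ext <| Finsupp.ext fun e => ?_, AddMonoidAlgebra.ext <| Finsupp.ext fun e => ?_,
          AddMonoidAlgebra.ext <| Finsupp.ext fun e => ?_⟩
      · by_cases he : e = 0
        · subst he
          have := happ 0
          rw [hp n hn 0 (by simp), hp' n hn 0 (by simp),
            hm n hn 0 (by simp), hm' n hn 0 (by simp)] at this
          simpa using this
        · rw [h0 n hn e he, h0' n hn e he]
      · by_cases he : e.2 = 0 ∧ 0 < e.1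
        · have hene : e ≠ 0 := by
            intro h; rw [h] at he; exact absurd he.2 (by simp)
          have hnm : ¬(e.2 = 0 ∧ e.1 < 0) := by
            intro h; omega
          have := happ e
          rw [h0 n hn e hene, h0' n hn e hene, hm n hn e hnm, hm' n hn e hnm] at this
          simpa using this
        · rw [hp n hn e he, hp' n hn e he]
      · by_cases he : e.2 = 0 ∧ e.1 < 0
        · have hene : e ≠ 0 := by
            intro h; rw [h] at he; exact absurd he.2 (by simp)
          have hnp : ¬(e.2 = 0 ∧ 0 < e.1) := by
            intro h; omega
          have := happ e
          rw [h0 n hn e hene, h0' n hn e hene, hp n hn e hnp, hp' n hn e hnp] at this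
          simpa using this
        · rw [hm n hn e he, hm' n hn e he]
  exact ⟨PowerSeries.ext fun n => (key n).1, PowerSeries.ext fun n => (key n).2.1,
    PowerSeries.ext fun n => (key n).2.2⟩

end SlitPlane

namespace SlitPlane

lemma Pprop_nil : Pprop ([] : List Pt) := ⟨rfl, fun i hi => by simp at hi⟩
lemma Cprop_nil : Cprop ([] : List Pt) := by
  refine ⟨fun i hi => ?_, rfl⟩
  have hi0 : i = 0 := by simpa using hi
  subst hi0
  rintro ⟨-, h⟩
  rw [vert_zero] at h
  exact absurd h (by norm_num [Prod.fst_zero])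
lemma AvoidsH_nil : AvoidsH ([] : List Pt) := fun i h1 h2 => by simp at h2; omega
lemma Bil_nil : Bil ([] : List Pt) := rfl
lemma Phi23_nil : Phi23 ([] : List Pt) := Cprop_nil.1

lemma Pprop_sum {l : List Pt} (h : Pprop l) (hne : l ≠ []) :
    l.sum.2 = 0 ∧ l.sum.1 < 0 := by
  refine ⟨h.1, ?_⟩
  have h2 := h.2 0 (List.length_pos_iff.2 hne)
  rw [vert_zero] at h2
  push_neg at h2
  have h3 := h2 (by norm_num [Prod.snd_zero])
  rw [Prod.fst_zero] at h3
  omega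

lemma QBil_sum {l : List Pt} (h : AvoidsH l ∧ Bil l) (hne : l ≠ []) :
    l.sum.2 = 0 ∧ 0 < l.sum.1 := by
  refine ⟨h.2, ?_⟩
  have := h.1 l.length (by
    have := List.length_pos_iff.2 hne; omega) (le_refl _)
  rw [vert_length] at this
  rw [OnH] at this
  push_neg at this
  exact this h.2

lemma length_pos_of_coeff {n : ℕ} (hn : 1 ≤ n) {l : List Pt}
    (hl : l.length = n) : l ≠ [] := by
  intro h; rw [h] at hl; simp at hl; omega

/-- Support lemma: a class whose nonempty members have endpoint satisfying `P`
has coefficients supported on `P`. -/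
lemma gf_support (S : Finset Pt) (Φ : List Pt → Prop) (P : Pt → Prop)
    (hΦ : ∀ l : List Pt, Φ l → l ≠ [] → P l.sum)
    (n : ℕ) (hn : 1 ≤ n) (e : Pt) (he : ¬ P e) :
    (PowerSeries.coeff (R := E2) n (gfW S List.sum Φ)).coeff e = 0 := by
  rw [gfW_coeff_apply']
  have hset : {l : List Pt | l.length = n ∧ StepsIn S l ∧ Φ l ∧ l.sum = e} = ∅ := by
    ext l
    simp only [Set.mem_setOf_eq, Set.mem_empty_iff_false, iff_false]
    rintro ⟨h1, -, h2, h3⟩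
    exact he (h3 ▸ hΦ l h2 (length_pos_of_coeff hn h1))
  rw [hset, Set.ncard_empty]
  simp

lemma iotaX_injective : Function.Injective iotaX := by
  intro a b hab
  have hab' := congrArg AddMonoidAlgebra.coeff hab
  rw [iotaX_apply, iotaX_apply] at hab'
  exact AddMonoidAlgebra.coeff_injective (Finsupp.mapDomain_injective (fun x y hxy => by simpa using (Prod.mk.injEq _ _ _ _ ▸ hxy).1) hab')

lemma psmap_map {R S T : Type} [CommRing R] [CommRing S] [CommRing T]
    (f : R →+* S) (g : S →+* T) (φ : PowerSeries R) :
    PowerSeries.map g (PowerSeries.map f φ) = PowerSeries.map (g.comp f) φ := by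
  refine PowerSeries.ext fun n => ?_
  simp [PowerSeries.coeff_map]

lemma iotaX_comp_algebraMap : iotaX.comp (algebraMap ℝ E1) = algebraMap ℝ E2 := by
  refine RingHom.ext fun r => ?_
  rw [RingHom.comp_apply, AddMonoidAlgebra.coe_algebraMap, AddMonoidAlgebra.coe_algebraMap]
  simp only [Function.comp_apply, Algebra.algebraMap_self, RingHom.id_apply]
  apply AddMonoidAlgebra.coeff_injective
  rw [iotaX_apply, AddMonoidAlgebra.coeff_single, Finsupp.mapDomain_single]
  rfl

end SlitPlane

namespace SlitPlane

/-- the complete solution: if `(B₀, B₊, B₋)` is the canonical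
factorization of the generating function `B` of bilateral walks, then `L = B₀`,
`S₀ = B₊`, and `K(x,y;t) S(x,y;t) B₀(t) B₋(x⁻¹;t) = 1`. -/
theorem statement9 (S : Finset Pt)
    (B Bp Bm : PowerSeries E1) (B0 : PowerSeries ℝ)
    (Sgf : PowerSeries E2) (S0 : PowerSeries E1) (L : PowerSeries ℝ)
    (hB : ∀ (n : ℕ) (i : ℤ),
      (PowerSeries.coeff (R := E1) n B).coeff i = (walkCount S n (i, 0) : ℝ))
    (hfact : IsCanonicalFactorization B B0 Bp Bm)
    (hS : ∀ (n : ℕ) (e : Pt),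
      (PowerSeries.coeff (R := E2) n Sgf).coeff e = (slitCount S n e : ℝ))
    (hS0 : ∀ (n : ℕ) (i : ℤ),
      (PowerSeries.coeff (R := E1) n S0).coeff i = (slitCount S n (i, 0) : ℝ))
    (hL : ∀ n : ℕ, PowerSeries.coeff (R := ℝ) n L = (loopCount S n : ℝ)) :
    L = B0 ∧ S0 = Bp ∧
    Kpoly S * Sgf * PowerSeries.map (algebraMap ℝ E2) B0
      * PowerSeries.map iotaX Bm = 1 := by
  classical
  have hwt : ∀ a b : List Pt, (a ++ b).sum = a.sum + b.sum := fun a b => List.sum_append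
  -- combinatorial factorizations
  have htop : gfW S List.sum (fun _ => True) = gfW S List.sum Pprop * gfW S List.sum Phi23 :=
    gfW_mul S List.sum hwt _ _ _ (fun l _ => split2_exists l) split2_uniq
      (fun _ _ _ _ => trivial)
  have h23 : gfW S List.sum Phi23 = gfW S List.sum Cprop * gfW S List.sum AvoidsH :=
    gfW_mul S List.sum hwt _ _ _ (fun l hl => split1_exists l hl) split1_uniq split1_glue
  have hbil : gfW S List.sum Bil
      = gfW S List.sum Pprop * gfW S List.sum (fun l => Phi23 l ∧ Bil l) := by
    refine gfW_mul S List.sum hwt _ _ _ ?_ ?_ ?_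
    · intro l hl
      obtain ⟨p, r, rfl, h1, h2⟩ := split2_exists l
      refine ⟨p, r, rfl, h1, h2, ?_⟩
      rw [Bil, List.sum_append, Prod.snd_add, h1.1] at hl
      rw [Bil]
      linarith
    · exact fun p q p' q' h1 h2 h3 h4 h5 => split2_uniq p q p' q' h1 h2.1 h3 h4.1 h5
    · intro p q h1 h2
      rw [Bil, List.sum_append, Prod.snd_add, h1.1, h2.2]
      norm_num
  have h23b : gfW S List.sum (fun l => Phi23 l ∧ Bil l)
      = gfW S List.sum Cprop * gfW S List.sum (fun l => AvoidsH l ∧ Bil l) := by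
    refine gfW_mul S List.sum hwt _ _ _ ?_ ?_ ?_
    · rintro l ⟨hl1, hl2⟩
      obtain ⟨c, q, rfl, h1, h2⟩ := split1_exists l hl1
      refine ⟨c, q, rfl, h1, h2, ?_⟩
      rw [Bil, List.sum_append, Prod.snd_add, h1.2] at hl2
      rw [Bil]
      simpa using hl2
    · exact fun p q p' q' h1 h2 h3 h4 h5 => split1_uniq p q p' q' h1 h2.1 h3 h4.1 h5
    · intro p q h1 h2
      refine ⟨split1_glue p q h1 h2.1, ?_⟩
      rw [Bil, List.sum_append, Prod.snd_add, h1.2, h2.2]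
      norm_num
  -- identifications
  have hSgf : Sgf = gfW S List.sum AvoidsH := Sgf_eq S Sgf hS
  have hLC : PowerSeries.map (algebraMap ℝ E2) L = gfW S List.sum Cprop := mapL_eq S L hL
  have hBgf : PowerSeries.map iotaX B = gfW S List.sum Bil := by
    refine map_iotaX_eq_gf S B Bil (fun l h => h) ?_
    intro n i
    rw [hB, walkCount]
    congr 2
    ext l
    simp only [Set.mem_setOf_eq]
    constructor
    · rintro ⟨a, b, c⟩
      exact ⟨a, b, by rw [Bil, c], c⟩
    · rintro ⟨a, b, -, c⟩
      exact ⟨a, b, c⟩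
  have hS0gf : PowerSeries.map iotaX S0 = gfW S List.sum (fun l => AvoidsH l ∧ Bil l) := by
    refine map_iotaX_eq_gf S S0 _ (fun l h => h.2) ?_
    intro n i
    rw [hS0, slitCount]
    congr 2
    ext l
    simp only [Set.mem_setOf_eq]
    constructor
    · rintro ⟨a, b, c, d⟩
      exact ⟨a, b, ⟨c, by rw [Bil, d]⟩, d⟩
    · rintro ⟨a, b, ⟨c, -⟩, d⟩
      exact ⟨a, b, c, d⟩
  obtain ⟨hfeq, hfp, hfm, hf0c, hfpc, hfmc, hfp0, hfm0⟩ := hfact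
  have hmapB : PowerSeries.map iotaX B
      = PowerSeries.map (algebraMap ℝ E2) B0 * PowerSeries.map iotaX Bp
        * PowerSeries.map iotaX Bm := by
    rw [hfeq, map_mul, map_mul, psmap_map, iotaX_comp_algebraMap]
  -- support conditions
  have sA0 : ∀ n : ℕ, 1 ≤ n → ∀ e : Pt, e ≠ 0 →
      (PowerSeries.coeff (R := E2) n (PowerSeries.map (algebraMap ℝ E2) B0)).coeff e = 0 := by
    intro n hn e he
    rw [PowerSeries.coeff_map, AddMonoidAlgebra.coe_algebraMap]
    simp only [Function.comp_apply, Algebra.algebraMap_self, RingHom.id_apply]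
    rw [AddMonoidAlgebra.coeff_single, Finsupp.single_apply, if_neg (fun h => he h.symm)]
  have sA0' : ∀ n : ℕ, 1 ≤ n → ∀ e : Pt, e ≠ 0 →
      (PowerSeries.coeff (R := E2) n (gfW S List.sum Cprop)).coeff e = 0 := by
    intro n hn e he
    exact gf_support S Cprop (fun p => p = 0) (fun l h _ => h.2) n hn e he
  have sAp : ∀ n : ℕ, 1 ≤ n → ∀ e : Pt, ¬(e.2 = 0 ∧ 0 < e.1) →
      (PowerSeries.coeff (R := E2) n (PowerSeries.map iotaX Bp)).coeff e = 0 := by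
    rintro n hn ⟨i, j⟩ he
    rw [PowerSeries.coeff_map, iotaX_coeff_eq]
    by_cases hj : j = 0
    · subst hj
      rw [if_pos rfl]
      have hi : ¬ (0 < i) := fun h => he ⟨rfl, h⟩
      rcases lt_or_eq_of_le (not_lt.1 hi) with h | h
      · exact hfp n i h
      · rw [h]; exact hfp0 n hn
    · rw [if_neg hj]
  have sAp' : ∀ n : ℕ, 1 ≤ n → ∀ e : Pt, ¬(e.2 = 0 ∧ 0 < e.1) →
      (PowerSeries.coeff (R := E2) n (gfW S List.sum (fun l => AvoidsH l ∧ Bil l))).coeff e = 0 := by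
    intro n hn e he
    exact gf_support S _ (fun p => p.2 = 0 ∧ 0 < p.1) (fun l h hne => QBil_sum h hne) n hn e he
  have sAm : ∀ n : ℕ, 1 ≤ n → ∀ e : Pt, ¬(e.2 = 0 ∧ e.1 < 0) →
      (PowerSeries.coeff (R := E2) n (PowerSeries.map iotaX Bm)).coeff e = 0 := by
    rintro n hn ⟨i, j⟩ he
    rw [PowerSeries.coeff_map, iotaX_coeff_eq]
    by_cases hj : j = 0
    · subst hj
      rw [if_pos rfl]
      have hi : ¬ (i < 0) := fun h => he ⟨rfl, h⟩
      rcases lt_or_eq_of_le (not_lt.1 hi) with h | h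
      · exact hfm n i h
      · rw [← h]; exact hfm0 n hn
    · rw [if_neg hj]
  have sAm' : ∀ n : ℕ, 1 ≤ n → ∀ e : Pt, ¬(e.2 = 0 ∧ e.1 < 0) →
      (PowerSeries.coeff (R := E2) n (gfW S List.sum Pprop)).coeff e = 0 := by
    intro n hn e he
    exact gf_support S _ (fun p => p.2 = 0 ∧ p.1 < 0) (fun l h hne => Pprop_sum h hne) n hn e he
  -- constant terms
  have cA0 : PowerSeries.coeff (R := E2) 0 (PowerSeries.map (algebraMap ℝ E2) B0) = 1 := by
    rw [PowerSeries.coeff_map, hf0c, map_one]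
  have cA0' : PowerSeries.coeff (R := E2) 0 (gfW S List.sum Cprop) = 1 :=
    gfW_coeff_zero _ _ _ rfl Cprop_nil
  have cAp : PowerSeries.coeff (R := E2) 0 (PowerSeries.map iotaX Bp) = 1 := by
    rw [PowerSeries.coeff_map, hfpc, map_one]
  have cAp' : PowerSeries.coeff (R := E2) 0 (gfW S List.sum (fun l => AvoidsH l ∧ Bil l)) = 1 :=
    gfW_coeff_zero _ _ _ rfl ⟨AvoidsH_nil, Bil_nil⟩
  have cAm : PowerSeries.coeff (R := E2) 0 (PowerSeries.map iotaX Bm) = 1 := by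
    rw [PowerSeries.coeff_map, hfmc, map_one]
  have cAm' : PowerSeries.coeff (R := E2) 0 (gfW S List.sum Pprop) = 1 :=
    gfW_coeff_zero _ _ _ rfl Pprop_nil
  have hprodeq : PowerSeries.map (algebraMap ℝ E2) B0 * PowerSeries.map iotaX Bp
      * PowerSeries.map iotaX Bm
      = gfW S List.sum Cprop * gfW S List.sum (fun l => AvoidsH l ∧ Bil l)
        * gfW S List.sum Pprop := by
    rw [← hmapB, hBgf, hbil, h23b]
    ring
  obtain ⟨u0, up, um⟩ := factorization_uniq _ _ _ _ _ _ sA0 sA0' sAp sAp' sAm sAm'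
    cA0 cA0' cAp cAp' cAm cAm' hprodeq
  have hmapinj : Function.Injective (PowerSeries.map (algebraMap ℝ E2)) := by
    intro a b hab
    refine PowerSeries.ext fun n => (algebraMap ℝ E2).injective ?_
    rw [← PowerSeries.coeff_map, hab, PowerSeries.coeff_map]
  have hmapiotainj : Function.Injective (PowerSeries.map iotaX) := by
    intro a b hab
    refine PowerSeries.ext fun n => iotaX_injective ?_
    rw [← PowerSeries.coeff_map, hab, PowerSeries.coeff_map]
  refine ⟨?_, ?_, ?_⟩
  · exact hmapinj (by rw [hLC, ← u0])
  · exact hmapiotainj (by rw [hS0gf, ← up])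
  · rw [hSgf, u0, um]
    have hT : gfW S List.sum AvoidsH * gfW S List.sum Cprop * gfW S List.sum Pprop
        = gfW S List.sum (fun _ => True) := by
      rw [htop, h23]
      ring
    calc Kpoly S * gfW S List.sum AvoidsH * gfW S List.sum Cprop * gfW S List.sum Pprop
        = Kpoly S * (gfW S List.sum AvoidsH * gfW S List.sum Cprop * gfW S List.sum Pprop) := by
          ring
      _ = Kpoly S * gfW S List.sum (fun _ => True) := by rw [hT]
      _ = 1 := K_mul_gf_top S

end SlitPlane
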